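/- For every end component (R^c, B^c) of the collapsed MDP M^c with s_+, s_- ∉ R^c, the pair (R, B) with R = states(R^c) and B = B^c ∪ ⋃_{s_{(R_i,B_i)} ∈ R^c} B_i is an end component of the original MDP M. -/

import Mathlib

/-!
STATEMENT 4: For every end component (R^c, B^c) of the collapsed MDP M^c with
s₊, s₋ ∉ R^c, the pair (states(R^c), B^c ∪ ⋃_{s_{(R_i,B_i)} ∈ R^c} B_i) is an end
component of the original MDP M.
-/

open Finset
open scoped Classical

/-- A finite MDP with per-state disjoint action sets: `stOf` assigns to every
action the unique state at which it is available. -/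
structure MDP (S A : Type) [Fintype S] [DecidableEq S] [Fintype A] [DecidableEq A] where
  act : S → Finset A
  act_ne : ∀ s, (act s).Nonempty
  stOf : A → S
  stOf_spec : ∀ s a, a ∈ act s → stOf a = s
  P : S → A → S → ℝ
  P_nonneg : ∀ s a s', 0 ≤ P s a s'
  P_sum : ∀ s, ∀ a ∈ act s, ∑ s', P s a s' = 1

/-- A finite path of length `N`: states `st 0, …, st N` and actions
`ac 0, …, ac (N−1)`, each action available and each transition of positive
probability. -/
def IsPath {σ α : Type*} (act : σ → Finset α) (P : σ → α → σ → ℝ)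
    (N : ℕ) (st : ℕ → σ) (ac : ℕ → α) : Prop :=
  ∀ k, k < N → ac k ∈ act (st k) ∧ 0 < P (st k) (ac k) (st (k + 1))

/-- One step inside the sub-system `(R, B)`. -/
def stepIn {σ α : Type*} (act : σ → Finset α) (P : σ → α → σ → ℝ)
    (R : Finset σ) (B : Finset α) (x y : σ) : Prop :=
  x ∈ R ∧ y ∈ R ∧ ∃ a ∈ B, a ∈ act x ∧ 0 < P x a y

/-- End component. -/
def IsEC {σ α : Type*} (act : σ → Finset α) (P : σ → α → σ → ℝ)
    (R : Finset σ) (B : Finset α) : Prop :=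
  R.Nonempty ∧ B.Nonempty ∧
  (∀ a ∈ B, ∃ s ∈ R, a ∈ act s) ∧
  (∀ s ∈ R, ∀ a ∈ B, a ∈ act s → ∀ s', 0 < P s a s' → s' ∈ R) ∧
  (∀ s ∈ R, ∀ s' ∈ R, Relation.ReflTransGen (stepIn act P R B) s s')

/-- Maximal end component. -/
def IsMEC {σ α : Type*} (act : σ → Finset α) (P : σ → α → σ → ℝ)
    (R : Finset σ) (B : Finset α) : Prop :=
  IsEC act P R B ∧
  ∀ R' B', IsEC act P R' B' → R ⊆ R' → B ⊆ B' → R = R' ∧ B = B'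

/-- The state space of the collapsed MDP (before restricting to valid states):
original states, representative states `s_{(R_i,B_i)}` (one per collapsed EC), and
the two fresh states `s₊` (`Sum.inr true`) and `s₋` (`Sum.inr false`). -/
abbrev CS (S : Type) (n : ℕ) : Type := (S ⊕ Fin n) ⊕ Bool

/-- The action alphabet of the collapsed MDP: original actions, the `rem_i`
actions (one per collapsed EC), and the self-loop actions `a₊` (`Sum.inr true`)
and `a₋` (`Sum.inr false`). -/
abbrev CA (A : Type) (n : ℕ) : Type := (A ⊕ Fin n) ⊕ Bool

variable {S A : Type} [Fintype S] [DecidableEq S] [Fintype A] [DecidableEq A] {n : ℕ}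

/-- A collapsed state is valid if it is not an original state belonging to one of
the collapsed ECs. -/
def Valid (R : Fin n → Finset S) (x : CS S n) : Prop :=
  ∀ s : S, x = Sum.inl (Sum.inl s) → ∀ i, s ∉ R i

instance {R : Fin n → Finset S} : DecidablePred (Valid R) := fun x =>
  inferInstanceAs (Decidable (∀ s : S, x = Sum.inl (Sum.inl s) → ∀ i, s ∉ R i))

/-- The state space `S^c` of the collapsed MDP. -/
abbrev CSv (R : Fin n → Finset S) : Type _ := {x : CS S n // Valid R x}

/-- `states(s^c)`: the set of original states represented by a collapsed state. -/
def statesOf (R : Fin n → Finset S) : CS S n → Finset S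
  | Sum.inl (Sum.inl s) => {s}
  | Sum.inl (Sum.inr i) => R i
  | Sum.inr _ => ∅

/-- The map `collapsed : S → S^c`, sending a state to its representative if it
belongs to a collapsed EC and to itself otherwise. -/
noncomputable def collapseV (R : Fin n → Finset S) (s : S) : CSv R :=
  if h : ∃ i, s ∈ R i then
    ⟨Sum.inl (Sum.inr (Classical.choose h)), by intro t ht; simp at ht⟩
  else
    ⟨Sum.inl (Sum.inl s), by
      intro t ht i hi
      simp only [Sum.inl.injEq] at ht
      subst ht
      exact h ⟨i, hi⟩⟩

/-- The terminal states `s₊ = term R true` and `s₋ = term R false` of the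
collapsed MDP. -/
def term (R : Fin n → Finset S) (b : Bool) : CSv R :=
  ⟨Sum.inr b, by intro t ht; simp at ht⟩

/-- The representative state `s_{(R_i,B_i)}` of the `i`-th collapsed EC. -/
def repV (R : Fin n → Finset S) (i : Fin n) : CSv R :=
  ⟨Sum.inl (Sum.inr i), by intro t ht; simp at ht⟩

/-- The available actions `A^c` of the collapsed MDP. -/
noncomputable def cAct (M : MDP S A) (R : Fin n → Finset S) (B : Fin n → Finset A) :
    CSv R → Finset (CA A n) := fun x =>
  match x.1 with
  | Sum.inl (Sum.inl s) => (M.act s).image fun a => Sum.inl (Sum.inl a)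
  | Sum.inl (Sum.inr i) =>
      insert (Sum.inl (Sum.inr i))
        (((R i).biUnion M.act \ B i).image fun a => Sum.inl (Sum.inl a))
  | Sum.inr b => {Sum.inr b}

/-- The transition function `Δ^c` of the collapsed MDP: an original action keeps
its distribution (aggregated over the represented states), `rem_i` moves to `s₊`
or `s₋` according to whether the `i`-th EC contains a target state, and `a₊`, `a₋`
are self-loops. -/
noncomputable def cP (M : MDP S A) (R : Fin n → Finset S) (T : Finset S) :
    CSv R → CA A n → CSv R → ℝ := fun _x a y =>
  match a with
  | Sum.inl (Sum.inl a₀) => ∑ s' ∈ statesOf R y.1, M.P (M.stOf a₀) a₀ s'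
  | Sum.inl (Sum.inr i) =>
      if (R i ∩ T).Nonempty then (if y = term R true then 1 else 0)
      else (if y = term R false then 1 else 0)
  | Sum.inr b => if y = term R b then 1 else 0


private lemma exists_pos_of_sum_pos' {α : Type*} {s : Finset α} {f : α → ℝ}
    (h : 0 < ∑ i ∈ s, f i) : ∃ i ∈ s, 0 < f i := by
  by_contra hc
  push_neg at hc
  exact absurd (Finset.sum_nonpos hc) (not_le.mpr h)

lemma mem_statesOf_collapseV (R : Fin n → Finset S) (s : S) :
    s ∈ statesOf R (collapseV R s).1 := by
  unfold collapseV
  split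
  · next h => simpa [statesOf] using Classical.choose_spec h
  · simp [statesOf]

/-- EC correspondence from the collapsed MDP `M^c` back to `M`. -/
theorem ec_correspondence_collapse_to_normal (M : MDP S A) (n : ℕ) (R : Fin n → Finset S) (B : Fin n → Finset A)
    (hEC : ∀ i, IsEC M.act M.P (R i) (B i))
    (hdisj : ∀ i j, i ≠ j → Disjoint (R i) (R j))
    (T : Finset S)
    (Mc : MDP (CSv R) (CA A n))
    (Hact : ∀ x, Mc.act x = cAct M R B x)
    (HP : ∀ x a y, Mc.P x a y = cP M R T x a y)
    (Rc : Finset (CSv R)) (Bc : Finset (CA A n))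
    (hECc : IsEC Mc.act Mc.P Rc Bc)
    (hnoterm : ∀ b : Bool, term R b ∉ Rc) :
    IsEC M.act M.P
      (Rc.biUnion fun x => statesOf R x.1)
      ((Finset.univ.filter fun a : A => (Sum.inl (Sum.inl a) : CA A n) ∈ Bc) ∪
        (Finset.univ.filter fun i : Fin n => repV R i ∈ Rc).biUnion B) := by
  obtain ⟨hRcne, hBcne, hBcact, hclosec, hconnc⟩ := hECc
  set Rp : Finset S := Rc.biUnion fun x => statesOf R x.1 with hRpdef
  set Bp : Finset A :=
    (Finset.univ.filter fun a : A => (Sum.inl (Sum.inl a) : CA A n) ∈ Bc) ∪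
      (Finset.univ.filter fun i : Fin n => repV R i ∈ Rc).biUnion B with hBpdef
  have memRp : ∀ s : S, s ∈ Rp ↔ ∃ x ∈ Rc, s ∈ statesOf R x.1 := by
    intro s; simp [hRpdef, Finset.mem_biUnion]
  have memBp : ∀ a : A, a ∈ Bp ↔
      ((Sum.inl (Sum.inl a) : CA A n) ∈ Bc ∨ ∃ i, repV R i ∈ Rc ∧ a ∈ B i) := by
    intro a
    simp [hBpdef, Finset.mem_union, Finset.mem_filter, Finset.mem_biUnion]
  -- nonemptiness of statesOf for members of Rc
  have hstne : ∀ x ∈ Rc, (statesOf R x.1).Nonempty := by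
    rintro ⟨x1, hv⟩ hx
    rcases x1 with (s | i) | b
    · exact ⟨s, by simp [statesOf]⟩
    · simpa [statesOf] using (hEC i).1
    · exact absurd hx (by
        have : (⟨Sum.inr b, hv⟩ : CSv R) = term R b := rfl
        rw [this]; exact hnoterm b)
  -- every action of Bc is an original action
  have hBcshape : ∀ ac ∈ Bc, ∃ a : A, ac = Sum.inl (Sum.inl a) := by
    intro ac hac
    obtain ⟨x, hx, hactx⟩ := hBcact ac hac
    rw [Hact] at hactx
    rcases ac with (a | i) | b
    · exact ⟨a, rfl⟩
    · -- rem_i : leads to a terminal state, contradiction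
      exfalso
      have hxrep : x = repV R i := by
        obtain ⟨x1, hv⟩ := x
        rcases x1 with (s | j) | b
        · simp [cAct] at hactx
        · simp [cAct] at hactx
          subst hactx
          rfl
        · simp [cAct] at hactx
      by_cases hT : (R i ∩ T).Nonempty
      · have := hclosec x hx _ hac (by rw [Hact]; exact hactx)
          (term R true) (by rw [HP]; simp [cP, hT])
        exact hnoterm true this
      · have := hclosec x hx _ hac (by rw [Hact]; exact hactx)
          (term R false) (by rw [HP]; simp [cP, hT])
        exact hnoterm false this
    · -- a₊/a₋ : only available at terminal states
      exfalso
      obtain ⟨x1, hv⟩ := x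
      rcases x1 with (s | j) | b'
      · simp [cAct] at hactx
      · simp [cAct] at hactx
      · have : (⟨Sum.inr b', hv⟩ : CSv R) = term R b' := rfl
        rw [this] at hx
        exact hnoterm b' hx
  -- availability of collapsed original actions
  have act_of_cact : ∀ (x : CSv R) (a : A),
      (Sum.inl (Sum.inl a) : CA A n) ∈ cAct M R B x →
      ∃ u ∈ statesOf R x.1, a ∈ M.act u := by
    rintro ⟨x1, hv⟩ a hactx
    rcases x1 with (s | i) | b
    · simp [cAct] at hactx
      exact ⟨s, by simp [statesOf], hactx⟩
    · simp [cAct] at hactx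
      obtain ⟨⟨u, hu, hau⟩, _⟩ := hactx
      exact ⟨u, by simpa [statesOf] using hu, hau⟩
    · simp [cAct] at hactx
  -- key closure step: a positive move of an original action in Bc stays in Rp
  have keyclo : ∀ x ∈ Rc, ∀ a : A, (Sum.inl (Sum.inl a) : CA A n) ∈ Bc →
      (Sum.inl (Sum.inl a) : CA A n) ∈ Mc.act x →
      ∀ s', 0 < M.P (M.stOf a) a s' → s' ∈ Rp := by
    intro x hx a haBc hactx s' hpos
    have hy : collapseV R s' ∈ Rc := by
      apply hclosec x hx _ haBc hactx
      rw [HP]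
      show 0 < ∑ t ∈ statesOf R (collapseV R s').1, M.P (M.stOf a) a t
      calc (0 : ℝ) < M.P (M.stOf a) a s' := hpos
        _ ≤ _ := Finset.single_le_sum (f := fun t => M.P (M.stOf a) a t)
            (fun t _ => M.P_nonneg _ _ _) (mem_statesOf_collapseV R s')
    exact (memRp s').mpr ⟨collapseV R s', hy, mem_statesOf_collapseV R s'⟩
  -- Lemma A: connectivity inside a single collapsed state
  have lemA : ∀ x ∈ Rc, ∀ s ∈ statesOf R x.1, ∀ t ∈ statesOf R x.1,
      Relation.ReflTransGen (stepIn M.act M.P Rp Bp) s t := by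
    rintro ⟨x1, hv⟩ hx s hs t ht
    rcases x1 with (u | i) | b
    · simp [statesOf] at hs ht
      subst hs; subst ht
      exact Relation.ReflTransGen.refl
    · simp [statesOf] at hs ht
      have hxrep : (⟨Sum.inl (Sum.inr i), hv⟩ : CSv R) = repV R i := rfl
      have hrep : repV R i ∈ Rc := by rw [← hxrep]; exact hx
      have hRiRp : ∀ u ∈ R i, u ∈ Rp := fun u hu =>
        (memRp u).mpr ⟨repV R i, hrep, by simpa [repV, statesOf] using hu⟩
      have := (hEC i).2.2.2.2 s hs t ht
      refine Relation.ReflTransGen.mono ?_ _ _ this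
      rintro u v ⟨hu, hv', a, haB, haact, hp⟩
      exact ⟨hRiRp u hu, hRiRp v hv', a, (memBp a).mpr (Or.inr ⟨i, hrep, haB⟩), haact, hp⟩
    · simp [statesOf] at hs
  -- Lemma B: a collapsed step yields connectivity between represented states
  have lemB : ∀ x y : CSv R, stepIn Mc.act Mc.P Rc Bc x y →
      ∀ s ∈ statesOf R x.1, ∀ t ∈ statesOf R y.1,
      Relation.ReflTransGen (stepIn M.act M.P Rp Bp) s t := by
    rintro x y ⟨hx, hy, ac, hacBc, hacact, hpos⟩ s hs t ht
    obtain ⟨a, rfl⟩ := hBcshape ac hacBc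
    rw [Hact] at hacact
    obtain ⟨u, hu, hau⟩ := act_of_cact x a hacact
    have hstu : M.stOf a = u := M.stOf_spec u a hau
    rw [HP] at hpos
    have hpos' : 0 < ∑ t' ∈ statesOf R y.1, M.P (M.stOf a) a t' := hpos
    obtain ⟨t', ht', hpt'⟩ := exists_pos_of_sum_pos' hpos'
    rw [hstu] at hpt'
    have huRp : u ∈ Rp := (memRp u).mpr ⟨x, hx, hu⟩
    have ht'Rp : t' ∈ Rp := (memRp t').mpr ⟨y, hy, ht'⟩
    have step1 : stepIn M.act M.P Rp Bp u t' :=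
      ⟨huRp, ht'Rp, a, (memBp a).mpr (Or.inl hacBc), hau, hpt'⟩
    exact ((lemA x hx s hs u hu).tail step1).trans (lemA y hy t' ht' t ht)
  refine ⟨?_, ?_, ?_, ?_, ?_⟩
  · -- Rp nonempty
    obtain ⟨x, hx⟩ := hRcne
    obtain ⟨s, hs⟩ := hstne x hx
    exact ⟨s, (memRp s).mpr ⟨x, hx, hs⟩⟩
  · -- Bp nonempty
    obtain ⟨ac, hac⟩ := hBcne
    obtain ⟨a, rfl⟩ := hBcshape ac hac
    exact ⟨a, (memBp a).mpr (Or.inl hac)⟩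
  · -- every action of Bp is available somewhere in Rp
    intro a haBp
    rcases (memBp a).mp haBp with hac | ⟨i, hrep, haBi⟩
    · obtain ⟨x, hx, hactx⟩ := hBcact _ hac
      rw [Hact] at hactx
      obtain ⟨u, hu, hau⟩ := act_of_cact x a hactx
      exact ⟨u, (memRp u).mpr ⟨x, hx, hu⟩, hau⟩
    · obtain ⟨s, hsRi, has⟩ := (hEC i).2.2.1 a haBi
      exact ⟨s, (memRp s).mpr ⟨repV R i, hrep, by simpa [repV, statesOf] using hsRi⟩, has⟩
  · -- closure
    intro s hsRp a haBp haact s' hpos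
    rcases (memBp a).mp haBp with hac | ⟨i, hrep, haBi⟩
    · obtain ⟨x, hx, hsx⟩ := (memRp s).mp hsRp
      have hsts : M.stOf a = s := M.stOf_spec s a haact
      obtain ⟨x1, hv⟩ := x
      rcases x1 with (u | i) | b
      · simp [statesOf] at hsx
        subst hsx
        refine keyclo _ hx a hac ?_ s' (by rwa [hsts])
        rw [Hact]; simp [cAct]; exact haact
      · simp [statesOf] at hsx
        by_cases haBi : a ∈ B i
        · have hs'Ri : s' ∈ R i := (hEC i).2.2.2.1 s hsx a haBi haact s' hpos
          exact (memRp s').mpr ⟨⟨Sum.inl (Sum.inr i), hv⟩, hx, by simpa [statesOf] using hs'Ri⟩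
        · refine keyclo _ hx a hac ?_ s' (by rwa [hsts])
          rw [Hact]
          show (Sum.inl (Sum.inl a) : CA A n) ∈ cAct M R B ⟨Sum.inl (Sum.inr i), hv⟩
          exact Finset.mem_insert_of_mem (Finset.mem_image.mpr
            ⟨a, Finset.mem_sdiff.mpr ⟨Finset.mem_biUnion.mpr ⟨s, hsx, haact⟩, haBi⟩, rfl⟩)
      · simp [statesOf] at hsx
    · -- a ∈ B i with rep i ∈ Rc
      obtain ⟨t, htRi, hat⟩ := (hEC i).2.2.1 a haBi
      have : s = t := by
        have h1 := M.stOf_spec s a haact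
        have h2 := M.stOf_spec t a hat
        rw [← h1, h2]
      subst this
      have hs'Ri : s' ∈ R i := (hEC i).2.2.2.1 s htRi a haBi haact s' hpos
      exact (memRp s').mpr ⟨repV R i, hrep, by simpa [repV, statesOf] using hs'Ri⟩
  · -- connectivity
    intro s hs s' hs'
    obtain ⟨x, hx, hsx⟩ := (memRp s).mp hs
    obtain ⟨y, hy, hs'y⟩ := (memRp s').mp hs'
    have main : ∀ z : CSv R, Relation.ReflTransGen (stepIn Mc.act Mc.P Rc Bc) x z →
        z ∈ Rc → ∀ t ∈ statesOf R z.1,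
        Relation.ReflTransGen (stepIn M.act M.P Rp Bp) s t := by
      intro z hxz
      induction hxz with
      | refl => intro _ t ht; exact lemA x hx s hsx t ht
      | tail _ hbc ih =>
        intro _ t ht
        obtain ⟨hb, hc, -⟩ := id hbc
        obtain ⟨u, hu⟩ := hstne _ hb
        exact (ih hb u hu).trans (lemB _ _ hbc u hu t ht)
    exact main y (hconnc x hx y hy) hy s' hs'y
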